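/- Unconditional energy stability of the second-order convex splitting scheme: suppose φ^{k−1}, φ^k, ψ^k are periodic grid functions with Σ_{i,j} ψ^k(i,j) = 0, and (φ^{k+1}, ψ^{k+1}) is a periodic solution of the second-order convex splitting scheme. Then Σ_{i,j} ψ^{k+1}(i,j) = 0, Σ_{i,j} ψ^{k+1/2}(i,j) = 0, and the exact energy identity F̃(φ^{k+1}, φ^k, ψ^{k+1}) + s·‖ψ^{k+1/2}‖_{−1}² + (s⁴/2)·‖∇_h(D_s²φ^k)‖₂² = F̃(φ^k, φ^{k−1}, ψ^k) holds, where D_s²φ^k = (φ^{k+1} − 2φ^k + φ^{k−1})/s². -/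

import Mathlib

open Finset

noncomputable section

/-- Periodic grid functions on an `m × n` grid (indices taken modulo `m` and `n`). -/
abbrev Grid (m n : ℕ) := ZMod m × ZMod n → ℝ

/-- Forward difference in the `x` direction. -/
def Dx {m n : ℕ} (h : ℝ) (φ : Grid m n) : Grid m n :=
  fun p => (φ (p.1 + 1, p.2) - φ p) / h

/-- Forward difference in the `y` direction. -/
def Dy {m n : ℕ} (h : ℝ) (φ : Grid m n) : Grid m n :=
  fun p => (φ (p.1, p.2 + 1) - φ p) / h

/-- The five-point discrete Laplacian. -/
def lapH {m n : ℕ} (h : ℝ) (φ : Grid m n) : Grid m n :=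
  fun p => (φ (p.1 + 1, p.2) + φ (p.1 - 1, p.2) + φ (p.1, p.2 + 1) + φ (p.1, p.2 - 1)
    - 4 * φ p) / h ^ 2

/-- The discrete chemical potential `μ` of the second-order convex splitting scheme,
built from `φ^{k−1} = φm`, `φ^k = φk` and the unknown `φ^{k+1} = φn`. -/
def chemPot {m n : ℕ} (α h : ℝ) (φm φk φn : Grid m n) : Grid m n :=
  fun p => (φn p ^ 2 + φk p ^ 2) / 2 * ((φn p + φk p) / 2)
    + α * ((φn p + φk p) / 2)
    + lapH h (fun q => 3 * φk q - φm q) p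
    + lapH h (lapH h (fun q => (φn q + φk q) / 2)) p

/-- The second-order convex splitting scheme for the MPFC equation:
`β(ψ^{k+1} − ψ^k) = s Δₕμ − s ψ^{k+1/2}` and `φ^{k+1} − φ^k = s ψ^{k+1/2}`. -/
def Scheme {m n : ℕ} (β α s h : ℝ) (φm φk ψk φn ψn : Grid m n) : Prop :=
  (∀ p, β * (ψn p - ψk p)
      = s * lapH h (chemPot α h φm φk φn) p - s * ((ψn p + ψk p) / 2)) ∧
  (∀ p, φn p - φk p = s * ((ψn p + ψk p) / 2))

/-- Discrete `L²` norm. -/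
def norm2 {m n : ℕ} [NeZero m] [NeZero n] (h : ℝ) (φ : Grid m n) : ℝ :=
  Real.sqrt (h ^ 2 * ∑ p : ZMod m × ZMod n, φ p ^ 2)

/-- Discrete `L²` norm of the gradient. -/
def gradNorm2 {m n : ℕ} [NeZero m] [NeZero n] (h : ℝ) (φ : Grid m n) : ℝ :=
  Real.sqrt (h ^ 2 * ∑ p : ZMod m × ZMod n, (Dx h φ p ^ 2 + Dy h φ p ^ 2))

/-- Discrete `L⁴` norm. -/
def norm4 {m n : ℕ} [NeZero m] [NeZero n] (h : ℝ) (φ : Grid m n) : ℝ :=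
  (h ^ 2 * ∑ p : ZMod m × ZMod n, φ p ^ 4) ^ ((1 : ℝ) / 4)

/-- The discrete MPFC energy
`F(φ) = ¼‖φ‖₄⁴ + (α/2)‖φ‖₂² − ‖∇ₕφ‖₂² + ½‖Δₕφ‖₂²`. -/
def energyF {m n : ℕ} [NeZero m] [NeZero n] (α h : ℝ) (φ : Grid m n) : ℝ :=
  1 / 4 * norm4 h φ ^ 4 + α / 2 * norm2 h φ ^ 2 - gradNorm2 h φ ^ 2
    + 1 / 2 * norm2 h (lapH h φ) ^ 2

/-- `u` is the mean-zero periodic solution of the discrete Poisson problem `−Δₕu = ψ`;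
the "−1" norm of `ψ` is then `‖∇ₕu‖₂`. -/
def IsNegLapSol {m n : ℕ} [NeZero m] [NeZero n] (h : ℝ) (ψ u : Grid m n) : Prop :=
  (∑ p : ZMod m × ZMod n, u p = 0) ∧ ∀ p, -(lapH h u p) = ψ p

/-- The modified discrete pseudo-energy
`F̃(φ, φ̃, ψ) = F(φ) + (β/2)‖ψ‖_{−1}² + ½‖∇ₕ(φ − φ̃)‖₂²`, expressed through the
mean-zero solution `u` of `−Δₕu = ψ`, so that `‖ψ‖_{−1} = ‖∇ₕu‖₂`. -/
def Ftilde {m n : ℕ} [NeZero m] [NeZero n] (β α h : ℝ) (φ φt u : Grid m n) : ℝ :=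
  energyF α h φ + β / 2 * gradNorm2 h u ^ 2
    + 1 / 2 * gradNorm2 h (fun p => φ p - φt p) ^ 2
namespace MPFCAux

variable {m n : ℕ} [NeZero m] [NeZero n]

/-- Reindexing: shifting the first coordinate. -/
lemma sum_shift_x (f : Grid m n) :
    ∑ p : ZMod m × ZMod n, f (p.1 + 1, p.2) = ∑ p : ZMod m × ZMod n, f p := by
  apply Fintype.sum_equiv ((Equiv.addRight (1 : ZMod m)).prodCongr (Equiv.refl (ZMod n)))
  intro p
  rfl

lemma sum_shift_y (f : Grid m n) :
    ∑ p : ZMod m × ZMod n, f (p.1, p.2 + 1) = ∑ p : ZMod m × ZMod n, f p := by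
  apply Fintype.sum_equiv ((Equiv.refl (ZMod m)).prodCongr (Equiv.addRight (1 : ZMod n)))
  intro p
  rfl

lemma tele_x (F : Grid m n) :
    ∑ p : ZMod m × ZMod n, (F (p.1 + 1, p.2) - F p) = 0 := by
  rw [Finset.sum_sub_distrib, sum_shift_x, sub_self]

lemma tele_y (F : Grid m n) :
    ∑ p : ZMod m × ZMod n, (F (p.1, p.2 + 1) - F p) = 0 := by
  rw [Finset.sum_sub_distrib, sum_shift_y, sub_self]

/-- The raw (scaled) gradient pairing. -/
def gip [NeZero m] [NeZero n] (f g : Grid m n) : ℝ :=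
  ∑ p : ZMod m × ZMod n,
    ((f (p.1 + 1, p.2) - f p) * (g (p.1 + 1, p.2) - g p)
      + (f (p.1, p.2 + 1) - f p) * (g (p.1, p.2 + 1) - g p))

/-- Sum of the Laplacian vanishes. -/
lemma sum_lapH (h : ℝ) (φ : Grid m n) : ∑ p : ZMod m × ZMod n, lapH h φ p = 0 := by
  have h1 := tele_x (m := m) (n := n) φ
  have h2 := tele_y (m := m) (n := n) φ
  have h3 : ∑ p : ZMod m × ZMod n, (φ (p.1 - 1, p.2) - φ p) = 0 := by
    have t := tele_x (m := m) (n := n) (fun q => φ (q.1 - 1, q.2))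
    simp only [add_sub_cancel_right] at t
    rw [Finset.sum_sub_distrib] at t ⊢
    linarith
  have h4 : ∑ p : ZMod m × ZMod n, (φ (p.1, p.2 - 1) - φ p) = 0 := by
    have t := tele_y (m := m) (n := n) (fun q => φ (q.1, q.2 - 1))
    simp only [add_sub_cancel_right] at t
    rw [Finset.sum_sub_distrib] at t ⊢
    linarith
  have : ∑ p : ZMod m × ZMod n, lapH h φ p =
      (∑ p : ZMod m × ZMod n, ((φ (p.1 + 1, p.2) - φ p) + (φ (p.1 - 1, p.2) - φ p)
        + (φ (p.1, p.2 + 1) - φ p) + (φ (p.1, p.2 - 1) - φ p))) / h ^ 2 := by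
    rw [Finset.sum_div]
    refine Finset.sum_congr rfl fun p _ => ?_
    simp only [lapH]
    ring
  rw [this, Finset.sum_add_distrib, Finset.sum_add_distrib, Finset.sum_add_distrib,
    h1, h2, h3, h4]
  norm_num

/-- Summation by parts: the gradient pairing versus the Laplacian. -/
lemma gip_lap {h : ℝ} (hh : h ≠ 0) (f g : Grid m n) :
    gip f g = -(h ^ 2 * ∑ p : ZMod m × ZMod n, f p * lapH h g p) := by
  have key : h ^ 2 * ∑ p : ZMod m × ZMod n, f p * lapH h g p
      = ∑ p : ZMod m × ZMod n, f p * (g (p.1 + 1, p.2) + g (p.1 - 1, p.2)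
          + g (p.1, p.2 + 1) + g (p.1, p.2 - 1) - 4 * g p) := by
    rw [Finset.mul_sum]
    refine Finset.sum_congr rfl fun p _ => ?_
    simp only [lapH]
    field_simp
  simp only [gip]
  rw [key, eq_comm, neg_eq_iff_add_eq_zero, ← Finset.sum_add_distrib]
  have h1 : ∑ p : ZMod m × ZMod n,
      (f (p.1 + 1, p.2) * g (p.1 + 1, p.2) - f p * g p) = 0 :=
    tele_x (fun q => f q * g q)
  have h2 : ∑ p : ZMod m × ZMod n,
      (f (p.1, p.2 + 1) * g (p.1, p.2 + 1) - f p * g p) = 0 :=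
    tele_y (fun q => f q * g q)
  have h3 : ∑ p : ZMod m × ZMod n,
      (f (p.1 + 1, p.2) * g p - f p * g (p.1 - 1, p.2)) = 0 := by
    have t := tele_x (m := m) (n := n) (fun q => f q * g (q.1 - 1, q.2))
    simpa only [add_sub_cancel_right] using t
  have h4 : ∑ p : ZMod m × ZMod n,
      (f (p.1, p.2 + 1) * g p - f p * g (p.1, p.2 - 1)) = 0 := by
    have t := tele_y (m := m) (n := n) (fun q => f q * g (q.1, q.2 - 1))
    simpa only [add_sub_cancel_right] using t
  calc ∑ p : ZMod m × ZMod n,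
      (f p * (g (p.1 + 1, p.2) + g (p.1 - 1, p.2) + g (p.1, p.2 + 1) + g (p.1, p.2 - 1)
          - 4 * g p)
        + ((f (p.1 + 1, p.2) - f p) * (g (p.1 + 1, p.2) - g p)
          + (f (p.1, p.2 + 1) - f p) * (g (p.1, p.2 + 1) - g p)))
      = ∑ p : ZMod m × ZMod n,
        ((f (p.1 + 1, p.2) * g (p.1 + 1, p.2) - f p * g p)
          + (f (p.1, p.2 + 1) * g (p.1, p.2 + 1) - f p * g p)
          - (f (p.1 + 1, p.2) * g p - f p * g (p.1 - 1, p.2))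
          - (f (p.1, p.2 + 1) * g p - f p * g (p.1, p.2 - 1))) := by
        refine Finset.sum_congr rfl fun p _ => ?_
        ring
    _ = 0 := by
        simp only [Finset.sum_sub_distrib, Finset.sum_add_distrib, h1, h2, h3, h4]
        ring

lemma gip_comm (f g : Grid m n) : gip f g = gip g f := by
  refine Finset.sum_congr rfl fun p _ => ?_
  ring

/-- Self-adjointness of the discrete Laplacian. -/
lemma lap_selfadj {h : ℝ} (hh : h ≠ 0) (f g : Grid m n) :
    ∑ p : ZMod m × ZMod n, lapH h f p * g p = ∑ p : ZMod m × ZMod n, f p * lapH h g p := by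
  have e1 := gip_lap hh f g
  have e2 := gip_lap hh g f
  rw [gip_comm] at e2
  have : h ^ 2 * ∑ p : ZMod m × ZMod n, f p * lapH h g p
      = h ^ 2 * ∑ p : ZMod m × ZMod n, g p * lapH h f p := by linarith
  have h2 : (h : ℝ) ^ 2 ≠ 0 := pow_ne_zero _ hh
  have := mul_left_cancel₀ h2 this
  rw [this]
  exact Finset.sum_congr rfl fun p _ => mul_comm _ _

lemma norm2_sq (h : ℝ) (φ : Grid m n) :
    norm2 h φ ^ 2 = h ^ 2 * ∑ p : ZMod m × ZMod n, φ p ^ 2 :=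
  Real.sq_sqrt (by positivity)

lemma norm4_pow (h : ℝ) (φ : Grid m n) :
    norm4 h φ ^ 4 = h ^ 2 * ∑ p : ZMod m × ZMod n, φ p ^ 4 := by
  have hX : (0:ℝ) ≤ h ^ 2 * ∑ p : ZMod m × ZMod n, φ p ^ 4 := by positivity
  rw [norm4, ← Real.rpow_natCast ((h ^ 2 * ∑ p : ZMod m × ZMod n, φ p ^ 4) ^ ((1:ℝ)/4)) 4,
    ← Real.rpow_mul hX]
  norm_num

lemma gradNorm2_sq {h : ℝ} (hh : h ≠ 0) (φ : Grid m n) :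
    gradNorm2 h φ ^ 2 = gip φ φ := by
  rw [gradNorm2, Real.sq_sqrt (by positivity), gip, Finset.mul_sum]
  refine Finset.sum_congr rfl fun p _ => ?_
  simp only [Dx, Dy]
  field_simp

/-- Uniqueness of the mean-zero solution of the discrete Poisson problem. -/
lemma negLapSol_unique {h : ℝ} (hh : h ≠ 0) {ψ u v : Grid m n}
    (hu : IsNegLapSol h ψ u) (hv : IsNegLapSol h ψ v) : u = v := by
  set w : Grid m n := fun q => u q - v q with hw
  have hlap : ∀ p, lapH h w p = 0 := by
    intro p
    have h1 := hu.2 p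
    have h2 := hv.2 p
    have hlin : lapH h w p = lapH h u p - lapH h v p := by
      simp only [hw, lapH]; ring
    rw [hlin]
    have : lapH h u p = lapH h v p := by linarith
    rw [this, sub_self]
  have hg : gip w w = 0 := by
    rw [gip_lap hh]
    have : ∑ p : ZMod m × ZMod n, w p * lapH h w p = 0 :=
      Finset.sum_eq_zero fun p _ => by rw [hlap p, mul_zero]
    rw [this, mul_zero, neg_zero]
  have hzero : ∀ p : ZMod m × ZMod n,
      w (p.1 + 1, p.2) = w p ∧ w (p.1, p.2 + 1) = w p := by
    have hsum := (Finset.sum_eq_zero_iff_of_nonneg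
      (fun p _ => add_nonneg (mul_self_nonneg _) (mul_self_nonneg _) : ∀ p ∈ Finset.univ,
        (0:ℝ) ≤ (w (p.1 + 1, p.2) - w p) * (w (p.1 + 1, p.2) - w p)
          + (w (p.1, p.2 + 1) - w p) * (w (p.1, p.2 + 1) - w p))).mp hg
    intro p
    have e := hsum p (Finset.mem_univ p)
    have e1 : (w (p.1 + 1, p.2) - w p) * (w (p.1 + 1, p.2) - w p) = 0 := by
      nlinarith [mul_self_nonneg (w (p.1 + 1, p.2) - w p),
        mul_self_nonneg (w (p.1, p.2 + 1) - w p)]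
    have e2 : (w (p.1, p.2 + 1) - w p) * (w (p.1, p.2 + 1) - w p) = 0 := by
      nlinarith [mul_self_nonneg (w (p.1 + 1, p.2) - w p),
        mul_self_nonneg (w (p.1, p.2 + 1) - w p)]
    constructor
    · have := mul_self_eq_zero.mp e1; linarith
    · have := mul_self_eq_zero.mp e2; linarith
  have hconst : ∀ p : ZMod m × ZMod n, w p = w (0, 0) := by
    have step1 : ∀ (i : ℕ) (b : ZMod n), w ((i : ZMod m), b) = w (0, b) := by
      intro i
      induction i with
      | zero => intro b; norm_num
      | succ k ih =>
          intro b
          have hx := (hzero ((k : ZMod m), b)).1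
          have : ((k + 1 : ℕ) : ZMod m) = (k : ZMod m) + 1 := by push_cast; ring
          rw [this]
          rw [show ((k : ZMod m) + 1, b) = (((k : ZMod m), b).1 + 1, ((k : ZMod m), b).2) from rfl] at *
          rw [hx, ih b]
    have step2 : ∀ (j : ℕ), w ((0 : ZMod m), (j : ZMod n)) = w (0, 0) := by
      intro j
      induction j with
      | zero => norm_num
      | succ k ih =>
          have hy := (hzero ((0 : ZMod m), (k : ZMod n))).2
          have : ((k + 1 : ℕ) : ZMod n) = (k : ZMod n) + 1 := by push_cast; ring
          rw [this]
          rw [show ((0 : ZMod m), (k : ZMod n) + 1) = (((0:ZMod m), (k : ZMod n)).1, ((0:ZMod m), (k : ZMod n)).2 + 1) from rfl] at *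
          rw [hy, ih]
    intro p
    obtain ⟨a, b⟩ := p
    obtain ⟨i, hi⟩ := ZMod.natCast_zmod_surjective (n := m) a
    obtain ⟨j, hj⟩ := ZMod.natCast_zmod_surjective (n := n) b
    rw [← hi, ← hj, step1, step2]
  have hsum0 : ∑ p : ZMod m × ZMod n, w p = 0 := by
    simp only [hw]
    rw [Finset.sum_sub_distrib, hu.1, hv.1, sub_zero]
  have hcard : ∑ p : ZMod m × ZMod n, w p
      = (Fintype.card (ZMod m × ZMod n) : ℝ) * w (0, 0) := by
    rw [Finset.sum_congr rfl fun p _ => hconst p, Finset.sum_const, nsmul_eq_mul]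
    simp [Finset.card_univ]
  have hcardpos : (0:ℝ) < (Fintype.card (ZMod m × ZMod n) : ℝ) := by
    have : 0 < Fintype.card (ZMod m × ZMod n) := Fintype.card_pos
    exact_mod_cast this
  have hw0 : w (0, 0) = 0 := by
    rw [hsum0] at hcard
    have := hcard.symm
    rcases mul_eq_zero.mp this with hc | hx
    · exact absurd hc (ne_of_gt hcardpos)
    · exact hx
  funext p
  have := hconst p
  rw [hw0] at this
  have : u p - v p = 0 := this
  linarith

end MPFCAux

open MPFCAux

/-- Unconditional energy stability of the second-order convex splitting scheme:
`ψ^{k+1}` and `ψ^{k+1/2}` have zero mean, and the exact pseudo-energy identity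
`F̃(φ^{k+1}, φ^k, ψ^{k+1}) + s‖ψ^{k+1/2}‖₋₁² + (s⁴/2)‖∇ₕ(Dₛ²φ^k)‖₂²
  = F̃(φ^k, φ^{k−1}, ψ^k)` holds. -/
theorem scheme_energy_stability (m n : ℕ) [NeZero m] [NeZero n]
    (β α s h : ℝ) (hβ : 0 < β) (hα : 0 < α) (hs : 0 < s) (hh : 0 < h)
    (φm φk ψk φn ψn : Grid m n)
    (hψk : ∑ p : ZMod m × ZMod n, ψk p = 0)
    (hScheme : Scheme β α s h φm φk ψk φn ψn) :
    (∑ p : ZMod m × ZMod n, ψn p = 0) ∧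
    (∑ p : ZMod m × ZMod n, (ψn p + ψk p) / 2 = 0) ∧
    ∀ uhalf un uk : Grid m n,
      IsNegLapSol h (fun p => (ψn p + ψk p) / 2) uhalf →
      IsNegLapSol h ψn un → IsNegLapSol h ψk uk →
      Ftilde β α h φn φk un + s * gradNorm2 h uhalf ^ 2
          + s ^ 4 / 2
            * gradNorm2 h (fun p => (φn p - 2 * φk p + φm p) / s ^ 2) ^ 2
        = Ftilde β α h φk φm uk := by
  obtain ⟨heq1, heq2⟩ := hScheme
  have hne : h ≠ 0 := ne_of_gt hh
  -- mean-zero statements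
  have hsum1 : β * ∑ p : ZMod m × ZMod n, (ψn p - ψk p)
      = s * ∑ p : ZMod m × ZMod n, lapH h (chemPot α h φm φk φn) p
        - s * ∑ p : ZMod m × ZMod n, ((ψn p + ψk p) / 2) := by
    rw [Finset.mul_sum, Finset.mul_sum, Finset.mul_sum, ← Finset.sum_sub_distrib]
    exact Finset.sum_congr rfl fun p _ => heq1 p
  have hSn : ∑ p : ZMod m × ZMod n, ψn p = 0 := by
    rw [MPFCAux.sum_lapH, Finset.sum_sub_distrib, hψk, sub_zero] at hsum1
    have e : ∑ p : ZMod m × ZMod n, ((ψn p + ψk p) / 2)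
        = (∑ p : ZMod m × ZMod n, ψn p) / 2 := by
      rw [← Finset.sum_div, Finset.sum_add_distrib, hψk, add_zero]
    rw [e] at hsum1
    have hne2 : β + s / 2 ≠ 0 := by positivity
    have hz : (β + s / 2) * ∑ p : ZMod m × ZMod n, ψn p = 0 := by
      ring_nf
      ring_nf at hsum1
      linarith
    exact (mul_eq_zero.mp hz).resolve_left hne2
  have hShalf : ∑ p : ZMod m × ZMod n, (ψn p + ψk p) / 2 = 0 := by
    rw [← Finset.sum_div, Finset.sum_add_distrib, hψk, hSn]
    norm_num
  refine ⟨hSn, hShalf, ?_⟩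
  intro uhalf un uk huh hun huk
  -- uhalf is the average of un and uk
  have hmid : IsNegLapSol h (fun p => (ψn p + ψk p) / 2)
      (fun p => (un p + uk p) / 2) := by
    constructor
    · show ∑ p : ZMod m × ZMod n, (un p + uk p) / 2 = 0
      rw [← Finset.sum_div, Finset.sum_add_distrib, hun.1, huk.1]
      norm_num
    · intro p
      show -(lapH h (fun q => (un q + uk q) / 2) p) = (ψn p + ψk p) / 2
      have l1 : lapH h (fun q => (un q + uk q) / 2) p
          = (lapH h un p + lapH h uk p) / 2 := by
        simp only [lapH]; ring
      have e1 := hun.2 p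
      have e2 := huk.2 p
      rw [l1]; linarith
  have huheq : uhalf = fun p => (un p + uk p) / 2 :=
    MPFCAux.negLapSol_unique hne huh hmid
  -- tested scheme equation
  have hABC : β * ∑ p : ZMod m × ZMod n, (ψn p - ψk p) * uhalf p
      = s * ∑ p : ZMod m × ZMod n, lapH h (chemPot α h φm φk φn) p * uhalf p
        - s * ∑ p : ZMod m × ZMod n, ((ψn p + ψk p) / 2) * uhalf p := by
    rw [Finset.mul_sum, Finset.mul_sum, Finset.mul_sum, ← Finset.sum_sub_distrib]
    refine Finset.sum_congr rfl fun p _ => ?_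
    calc β * ((ψn p - ψk p) * uhalf p) = (β * (ψn p - ψk p)) * uhalf p := by ring
      _ = (s * lapH h (chemPot α h φm φk φn) p - s * ((ψn p + ψk p) / 2)) * uhalf p := by
          rw [heq1 p]
      _ = s * (lapH h (chemPot α h φm φk φn) p * uhalf p)
          - s * (((ψn p + ψk p) / 2) * uhalf p) := by ring
  -- A-side
  have hA : h ^ 2 * ∑ p : ZMod m × ZMod n, (ψn p - ψk p) * uhalf p
      = gip uhalf (fun q => un q - uk q) := by
    rw [MPFCAux.gip_lap hne]
    have hpt : ∑ p : ZMod m × ZMod n, (ψn p - ψk p) * uhalf p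
        = -∑ p : ZMod m × ZMod n, uhalf p * lapH h (fun q => un q - uk q) p := by
      rw [← Finset.sum_neg_distrib]
      refine Finset.sum_congr rfl fun p _ => ?_
      have e1 := hun.2 p
      have e2 := huk.2 p
      have l2 : lapH h (fun q => un q - uk q) p = lapH h un p - lapH h uk p := by
        simp only [lapH]; ring
      rw [l2, ← e1, ← e2]
      ring
    rw [hpt]; ring
  have hA2 : (gip un un - gip uk uk) / 2
      = gip (fun p => (un p + uk p) / 2) (fun q => un q - uk q) := by
    simp only [MPFCAux.gip]
    simp only [Finset.sum_div, ← Finset.sum_sub_distrib]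
    exact Finset.sum_congr rfl fun p _ => by ring
  -- C-side
  have hC : h ^ 2 * ∑ p : ZMod m × ZMod n, ((ψn p + ψk p) / 2) * uhalf p
      = gip uhalf uhalf := by
    rw [MPFCAux.gip_lap hne]
    have hpt : ∑ p : ZMod m × ZMod n, ((ψn p + ψk p) / 2) * uhalf p
        = -∑ p : ZMod m × ZMod n, uhalf p * lapH h uhalf p := by
      rw [← Finset.sum_neg_distrib]
      refine Finset.sum_congr rfl fun p _ => ?_
      have e1 : -(lapH h uhalf p) = (ψn p + ψk p) / 2 := huh.2 p
      rw [← e1]; ring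
    rw [hpt]; ring
  -- B-side
  have hB : s * ∑ p : ZMod m × ZMod n, lapH h (chemPot α h φm φk φn) p * uhalf p
      = -∑ p : ZMod m × ZMod n, chemPot α h φm φk φn p * (φn p - φk p) := by
    rw [MPFCAux.lap_selfadj hne, Finset.mul_sum, ← Finset.sum_neg_distrib]
    refine Finset.sum_congr rfl fun p _ => ?_
    have e1 : -(lapH h uhalf p) = (ψn p + ψk p) / 2 := huh.2 p
    have e2 := heq2 p
    have e3 : lapH h uhalf p = -((ψn p + ψk p) / 2) := by linarith
    rw [e2, e3]
    ring
  -- master identity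
  have m1 : h ^ 2 * (β * ∑ p : ZMod m × ZMod n, (ψn p - ψk p) * uhalf p)
      = h ^ 2 * (s * ∑ p : ZMod m × ZMod n, lapH h (chemPot α h φm φk φn) p * uhalf p)
        - h ^ 2 * (s * ∑ p : ZMod m × ZMod n, ((ψn p + ψk p) / 2) * uhalf p) := by
    rw [hABC]; ring
  have m2 : h ^ 2 * (β * ∑ p : ZMod m × ZMod n, (ψn p - ψk p) * uhalf p)
      = β / 2 * gip un un - β / 2 * gip uk uk := by
    rw [show h ^ 2 * (β * ∑ p : ZMod m × ZMod n, (ψn p - ψk p) * uhalf p)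
        = β * (h ^ 2 * ∑ p : ZMod m × ZMod n, (ψn p - ψk p) * uhalf p) from by ring,
      hA, huheq, ← hA2]
    ring
  have m3 : h ^ 2 * (s * ∑ p : ZMod m × ZMod n, lapH h (chemPot α h φm φk φn) p * uhalf p)
      = -(h ^ 2 * ∑ p : ZMod m × ZMod n, chemPot α h φm φk φn p * (φn p - φk p)) := by
    rw [hB]; ring
  have m4 : h ^ 2 * (s * ∑ p : ZMod m × ZMod n, ((ψn p + ψk p) / 2) * uhalf p)
      = s * gip uhalf uhalf := by
    rw [show h ^ 2 * (s * ∑ p : ZMod m × ZMod n, ((ψn p + ψk p) / 2) * uhalf p)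
        = s * (h ^ 2 * ∑ p : ZMod m × ZMod n, ((ψn p + ψk p) / 2) * uhalf p) from by ring,
      hC]
  have master : β / 2 * gip un un - β / 2 * gip uk uk + s * gip uhalf uhalf
      + h ^ 2 * ∑ p : ZMod m × ZMod n, chemPot α h φm φk φn p * (φn p - φk p) = 0 := by
    linarith [m1, m2, m3, m4]
  -- expansion of the chemical potential pairing
  have hsplit2 : h ^ 2 * ∑ p : ZMod m × ZMod n, chemPot α h φm φk φn p * (φn p - φk p)
      = h ^ 2 * ∑ p : ZMod m × ZMod n,
          ((φn p ^ 2 + φk p ^ 2) / 2 * ((φn p + φk p) / 2) * (φn p - φk p))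
        + h ^ 2 * ∑ p : ZMod m × ZMod n, (α * ((φn p + φk p) / 2) * (φn p - φk p))
        + h ^ 2 * ∑ p : ZMod m × ZMod n,
            (lapH h (fun q => 3 * φk q - φm q) p * (φn p - φk p))
        + h ^ 2 * ∑ p : ZMod m × ZMod n,
            (lapH h (lapH h (fun q => (φn q + φk q) / 2)) p * (φn p - φk p)) := by
    have hsp : ∑ p : ZMod m × ZMod n, chemPot α h φm φk φn p * (φn p - φk p)
        = ∑ p : ZMod m × ZMod n,
            ((φn p ^ 2 + φk p ^ 2) / 2 * ((φn p + φk p) / 2) * (φn p - φk p)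
            + α * ((φn p + φk p) / 2) * (φn p - φk p)
            + lapH h (fun q => 3 * φk q - φm q) p * (φn p - φk p)
            + lapH h (lapH h (fun q => (φn q + φk q) / 2)) p * (φn p - φk p)) := by
      refine Finset.sum_congr rfl fun p _ => ?_
      simp only [chemPot]
      ring
    rw [hsp]
    simp only [Finset.sum_add_distrib]
    ring
  have ht1h : h ^ 2 * ∑ p : ZMod m × ZMod n,
        ((φn p ^ 2 + φk p ^ 2) / 2 * ((φn p + φk p) / 2) * (φn p - φk p))
      = 1 / 4 * (h ^ 2 * ∑ p : ZMod m × ZMod n, φn p ^ 4)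
        - 1 / 4 * (h ^ 2 * ∑ p : ZMod m × ZMod n, φk p ^ 4) := by
    have e : ∑ p : ZMod m × ZMod n,
          ((φn p ^ 2 + φk p ^ 2) / 2 * ((φn p + φk p) / 2) * (φn p - φk p))
        = ∑ p : ZMod m × ZMod n, (φn p ^ 4 / 4 - φk p ^ 4 / 4) := by
      refine Finset.sum_congr rfl fun p _ => ?_
      ring
    rw [e, Finset.sum_sub_distrib, ← Finset.sum_div, ← Finset.sum_div]
    ring
  have ht2h : h ^ 2 * ∑ p : ZMod m × ZMod n, (α * ((φn p + φk p) / 2) * (φn p - φk p))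
      = α / 2 * (h ^ 2 * ∑ p : ZMod m × ZMod n, φn p ^ 2)
        - α / 2 * (h ^ 2 * ∑ p : ZMod m × ZMod n, φk p ^ 2) := by
    have e : ∑ p : ZMod m × ZMod n, (α * ((φn p + φk p) / 2) * (φn p - φk p))
        = ∑ p : ZMod m × ZMod n, (α * φn p ^ 2 / 2 - α * φk p ^ 2 / 2) := by
      refine Finset.sum_congr rfl fun p _ => ?_
      ring
    have e2 : ∑ p : ZMod m × ZMod n, (α * φn p ^ 2 / 2 - α * φk p ^ 2 / 2)
        = α / 2 * ∑ p : ZMod m × ZMod n, φn p ^ 2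
          - α / 2 * ∑ p : ZMod m × ZMod n, φk p ^ 2 := by
      rw [Finset.sum_sub_distrib, Finset.mul_sum, Finset.mul_sum]
      congr 1 <;> exact Finset.sum_congr rfl fun p _ => by ring
    rw [e, e2]
    ring
  have ht3h : h ^ 2 * ∑ p : ZMod m × ZMod n,
        (lapH h (fun q => 3 * φk q - φm q) p * (φn p - φk p))
      = -(gip φn φn) + gip φk φk
        + (gip (fun p => φn p - φk p) (fun p => φn p - φk p)
            - gip (fun p => φk p - φm p) (fun p => φk p - φm p)) / 2
        + gip (fun p => φn p - 2 * φk p + φm p) (fun p => φn p - 2 * φk p + φm p) / 2 := by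
    have base := MPFCAux.gip_lap hne (fun q => φn q - φk q) (fun q => 3 * φk q - φm q)
    have e1 : h ^ 2 * ∑ p : ZMod m × ZMod n,
          (lapH h (fun q => 3 * φk q - φm q) p * (φn p - φk p))
        = -(gip (fun q => φn q - φk q) (fun q => 3 * φk q - φm q)) := by
      rw [base, neg_neg]
      congr 1
      exact Finset.sum_congr rfl fun p _ => mul_comm _ _
    have e2 : gip φn φn - gip φk φk
        - (gip (fun p => φn p - φk p) (fun p => φn p - φk p)
            - gip (fun p => φk p - φm p) (fun p => φk p - φm p)) / 2
        - gip (fun p => φn p - 2 * φk p + φm p) (fun p => φn p - 2 * φk p + φm p) / 2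
        = gip (fun q => φn q - φk q) (fun q => 3 * φk q - φm q) := by
      simp only [MPFCAux.gip]
      simp only [Finset.sum_div, ← Finset.sum_sub_distrib]
      exact Finset.sum_congr rfl fun p _ => by ring
    rw [e1, ← e2]
    ring
  have ht4h : h ^ 2 * ∑ p : ZMod m × ZMod n,
        (lapH h (lapH h (fun q => (φn q + φk q) / 2)) p * (φn p - φk p))
      = 1 / 2 * (h ^ 2 * ∑ p : ZMod m × ZMod n, lapH h φn p ^ 2)
        - 1 / 2 * (h ^ 2 * ∑ p : ZMod m × ZMod n, lapH h φk p ^ 2) := by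
    have base := MPFCAux.lap_selfadj hne (lapH h (fun q => (φn q + φk q) / 2))
      (fun q => φn q - φk q)
    have e2 : ∑ p : ZMod m × ZMod n,
          lapH h (fun q => (φn q + φk q) / 2) p * lapH h (fun q => φn q - φk q) p
        = ∑ p : ZMod m × ZMod n, (lapH h φn p ^ 2 / 2 - lapH h φk p ^ 2 / 2) := by
      refine Finset.sum_congr rfl fun p _ => ?_
      have l1 : lapH h (fun q => (φn q + φk q) / 2) p
          = (lapH h φn p + lapH h φk p) / 2 := by simp only [lapH]; ring
      have l2 : lapH h (fun q => φn q - φk q) p = lapH h φn p - lapH h φk p := by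
        simp only [lapH]; ring
      rw [l1, l2]; ring
    rw [base, e2, Finset.sum_sub_distrib, ← Finset.sum_div, ← Finset.sum_div]
    ring
  have hs4h : s ^ 4 / 2 * gip (fun p => (φn p - 2 * φk p + φm p) / s ^ 2)
        (fun p => (φn p - 2 * φk p + φm p) / s ^ 2)
      = gip (fun p => φn p - 2 * φk p + φm p) (fun p => φn p - 2 * φk p + φm p) / 2 := by
    have e : gip (fun p => φn p - 2 * φk p + φm p) (fun p => φn p - 2 * φk p + φm p)
        = s ^ 4 * gip (fun p => (φn p - 2 * φk p + φm p) / s ^ 2)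
            (fun p => (φn p - 2 * φk p + φm p) / s ^ 2) := by
      simp only [MPFCAux.gip, Finset.mul_sum]
      refine Finset.sum_congr rfl fun p _ => ?_
      have hs2 : (s : ℝ) ^ 2 ≠ 0 := pow_ne_zero _ (ne_of_gt hs)
      field_simp
    rw [e]
    ring
  -- final assembly
  simp only [Ftilde, energyF, MPFCAux.norm4_pow, MPFCAux.norm2_sq,
    MPFCAux.gradNorm2_sq hne]
  linarith [master, hsplit2, ht1h, ht2h, ht3h, ht4h, hs4h]
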